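/- If ∑_{j≥0} r_j/p_j = ∞, then (−1)^n Q_n(−1) → ∞ as n → ∞. -/

import Mathlib

open Finset Filter

theorem stmt11 (p q r : ℕ → ℝ) (Q : ℕ → ℝ → ℝ)
    (hp : ∀ j, 0 < p j) (hq : ∀ j, 0 < q (j + 1)) (hr : ∀ j, 0 ≤ r j)
    (hq0 : q 0 = 0) (hs : ∀ j, p j + q j + r j = 1)
    (hQ0 : ∀ x : ℝ, Q 0 x = 1) (hQ1 : ∀ x : ℝ, p 0 * Q 1 x = x - r 0)
    (hQrec : ∀ n : ℕ, ∀ x : ℝ, x * Q (n + 1) x =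
      q (n + 1) * Q n x + r (n + 1) * Q (n + 1) x + p (n + 1) * Q (n + 2) x)
    (hdiv : Tendsto (fun n : ℕ => ∑ j ∈ Finset.range n, r j / p j) atTop atTop) :
    Tendsto (fun n : ℕ => (-1 : ℝ) ^ n * Q n (-1)) atTop atTop := by
  set a : ℕ → ℝ := fun n => (-1 : ℝ) ^ n * Q n (-1) with ha
  -- recurrence for a
  have hrec : ∀ n, p (n + 1) * (a (n + 2) - a (n + 1)) =
      q (n + 1) * (a (n + 1) - a n) + 2 * r (n + 1) * a (n + 1) := by
    intro n
    have h1 := hQrec n (-1)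
    have h2 := hs (n + 1)
    simp only [ha, pow_succ]
    linear_combination (-((-1 : ℝ) ^ n)) * h1 + ((-1 : ℝ) ^ n * Q (n + 1) (-1)) * h2
  -- key invariant
  have key : ∀ n, 1 ≤ a n ∧ 2 * (r n / p n) ≤ a (n + 1) - a n := by
    intro n
    induction n with
    | zero =>
      have ha0 : a 0 = 1 := by simp [ha, hQ0]
      have hp0 := hp 0
      have h1 := hQ1 (-1)
      have hs0 := hs 0
      constructor
      · rw [ha0]
      · have ha1 : p 0 * a 1 = 1 + r 0 := by
          simp only [ha, pow_one]
          linarith [h1]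
        rw [ha0]
        have : 2 * (r 0 / p 0) = (2 * r 0) / p 0 := by ring
        rw [this, div_le_iff₀ hp0]
        show 2 * r 0 ≤ (a (0 + 1) - 1) * p 0
        simp only [zero_add]
        nlinarith [hq0, ha1, hs0]
    | succ n ih =>
      obtain ⟨h1n, h2n⟩ := ih
      have hrp : 0 ≤ r n / p n := div_nonneg (hr n) (hp n).le
      have h1n' : 1 ≤ a (n + 1) := by nlinarith
      have hd : 0 ≤ a (n + 1) - a n := by nlinarith
      refine ⟨h1n', ?_⟩
      have hrn := hrec n
      have hpn := hp (n + 1)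
      have : 2 * (r (n + 1) / p (n + 1)) = (2 * r (n + 1)) / p (n + 1) := by ring
      rw [this, div_le_iff₀ hpn]
      nlinarith [mul_nonneg (hq n).le hd, mul_nonneg (hr (n + 1)) (sub_nonneg.2 h1n')]
  -- lower bound by partial sums
  have lb : ∀ n, 1 + 2 * ∑ j ∈ Finset.range n, r j / p j ≤ a n := by
    intro n
    induction n with
    | zero => simp [(key 0).1]
    | succ n ih =>
      rw [Finset.sum_range_succ]
      have := (key n).2
      linarith
  have h2 : Tendsto (fun n : ℕ => 1 + 2 * ∑ j ∈ Finset.range n, r j / p j) atTop atTop :=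
    tendsto_atTop_add_const_left _ 1 (hdiv.const_mul_atTop two_pos)
  exact tendsto_atTop_mono lb h2
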